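/- If p ≤ 1/2 < t ≤ 1, then for any nonnegative sequence (c_i) summing to 1, P(Σ c_i β_i ≥ t) ≤ p; i.e., bold play with a single stake c_1 = 1 is optimal. -/

import Mathlib

open MeasureTheory ProbabilityTheory

section Aux

variable {Ω : Type*} [MeasurableSpace Ω] (μ : Measure Ω) [IsProbabilityMeasure μ]

/-- One-step decomposition: conditioning on the `n`-th Bernoulli variable. -/
lemma bp_decomp (p : ℝ) (β : ℕ → Ω → ℝ) (hmeas : ∀ i, Measurable (β i))
    (hval : ∀ i ω, β i ω = 0 ∨ β i ω = 1)
    (hβp : ∀ i, μ {ω | β i ω = 1} = ENNReal.ofReal p)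
    (hindep : iIndepFun β μ)
    (hp0 : 0 ≤ p) (hp1 : p ≤ 1) (c : ℕ → ℝ) (n : ℕ) (w : ℝ) :
    μ {ω | w ≤ ∑ i ∈ Finset.range (n+1), c i * β i ω}
      = ENNReal.ofReal p * μ {ω | w - c n ≤ ∑ i ∈ Finset.range n, c i * β i ω}
        + ENNReal.ofReal (1-p) * μ {ω | w ≤ ∑ i ∈ Finset.range n, c i * β i ω} := by
  have hone : μ {ω | β n ω = 1} = ENNReal.ofReal p := hβp n
  have hmeasone : MeasurableSet {ω | β n ω = 1} := by
    have : {ω | β n ω = 1} = β n ⁻¹' {1} := rfl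
    rw [this]; exact (hmeas n) (measurableSet_singleton 1)
  have hzero : μ {ω | β n ω = 0} = ENNReal.ofReal (1 - p) := by
    have hcompl : {ω | β n ω = 0} = {ω | β n ω = 1}ᶜ := by
      ext ω; rcases hval n ω with h | h <;> simp [h]
    rw [hcompl, prob_compl_eq_one_sub hmeasone, hone,
      ENNReal.ofReal_sub 1 hp0, ENNReal.ofReal_one]
  by_cases hcn : c n = 0
  · have hset : {ω | w ≤ ∑ i ∈ Finset.range (n+1), c i * β i ω}
        = {ω | w ≤ ∑ i ∈ Finset.range n, c i * β i ω} := by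
      ext ω; simp [Finset.sum_range_succ, hcn]
    rw [hset, hcn, sub_zero, ← add_mul, ← ENNReal.ofReal_add hp0 (by linarith),
      show p + (1 - p) = 1 by ring, ENNReal.ofReal_one, one_mul]
  · -- independence of the partial sum and the n-th summand
    set f : ℕ → Ω → ℝ := fun i ω => c i * β i ω with hf
    have hfmeas : ∀ i, Measurable (f i) := fun i => (hmeas i).const_mul _
    have hfind : iIndepFun f μ := by
      have := hindep.comp (fun i (x : ℝ) => c i * x)
        (fun i => measurable_const_mul _)
      exact this
    have hTB : IndepFun (fun ω => ∑ i ∈ Finset.range n, f i ω) (f n) μ := by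
      have h := hfind.indepFun_finset_sum_of_notMem hfmeas
        (s := Finset.range n) (i := n) (by simp)
      have hfun : (∑ j ∈ Finset.range n, f j) = fun ω => ∑ i ∈ Finset.range n, f i ω := by
        funext ω; simp [Finset.sum_apply]
      rwa [hfun] at h
    set T : Ω → ℝ := fun ω => ∑ i ∈ Finset.range n, f i ω with hT
    have hTmeas : Measurable T := by
      apply Finset.measurable_sum
      intro i _; exact hfmeas i
    have hsplit : {ω | w ≤ ∑ i ∈ Finset.range (n+1), c i * β i ω}
        = (T ⁻¹' (Set.Ici (w - c n)) ∩ f n ⁻¹' {c n})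
          ∪ (T ⁻¹' (Set.Ici w) ∩ f n ⁻¹' {0}) := by
      ext ω
      have hsum : ∑ i ∈ Finset.range (n+1), c i * β i ω = T ω + f n ω := by
        simp [hT, hf, Finset.sum_range_succ]
      rcases hval n ω with h | h
      · have hfn : f n ω = 0 := by simp [hf, h]
        simp only [Set.mem_setOf_eq, hsum, hfn, Set.mem_union, Set.mem_inter_iff,
          Set.mem_preimage, Set.mem_Ici, Set.mem_singleton_iff, add_zero]
        constructor
        · intro hw; right; exact ⟨hw, trivial⟩
        · rintro (⟨h1, h2⟩ | ⟨h1, _⟩)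
          · exact absurd h2.symm hcn
          · exact h1
      · have hfn : f n ω = c n := by simp [hf, h]
        simp only [Set.mem_setOf_eq, hsum, hfn, Set.mem_union, Set.mem_inter_iff,
          Set.mem_preimage, Set.mem_Ici, Set.mem_singleton_iff]
        constructor
        · intro hw; left; exact ⟨by linarith, trivial⟩
        · rintro (⟨h1, _⟩ | ⟨h1, h2⟩)
          · linarith
          · exact absurd h2 hcn
    have hdisj : Disjoint (T ⁻¹' (Set.Ici (w - c n)) ∩ f n ⁻¹' {c n})
        (T ⁻¹' (Set.Ici w) ∩ f n ⁻¹' {0}) := by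
      rw [Set.disjoint_left]
      rintro ω ⟨_, h1⟩ ⟨_, h2⟩
      simp only [Set.mem_preimage, Set.mem_singleton_iff] at h1 h2
      rw [h1] at h2; exact hcn h2
    have hmeas1 : MeasurableSet (T ⁻¹' (Set.Ici w) ∩ f n ⁻¹' {0}) :=
      (hTmeas measurableSet_Ici).inter ((hfmeas n) (measurableSet_singleton 0))
    have hone' : μ (f n ⁻¹' {c n}) = ENNReal.ofReal p := by
      have hset : f n ⁻¹' {c n} = {ω | β n ω = 1} := by
        ext ω
        simp only [Set.mem_preimage, Set.mem_singleton_iff, Set.mem_setOf_eq, hf]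
        rcases hval n ω with h | h
        · rw [h]; constructor
          · intro h'; exfalso; apply hcn; rw [mul_zero] at h'; exact h'.symm
          · intro h'; norm_num at h'
        · rw [h]; constructor
          · intro _; rfl
          · intro _; rw [mul_one]
      rw [hset, hone]
    have hzero' : μ (f n ⁻¹' {0}) = ENNReal.ofReal (1 - p) := by
      have hset : f n ⁻¹' {0} = {ω | β n ω = 0} := by
        ext ω
        simp only [Set.mem_preimage, Set.mem_singleton_iff, Set.mem_setOf_eq, hf]
        rcases hval n ω with h | h
        · rw [h]; constructor
          · intro _; rfl
          · intro _; rw [mul_zero]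
        · rw [h]; constructor
          · intro h'; rw [mul_one] at h'; exact absurd h' hcn
          · intro h'; norm_num at h'
      rw [hset, hzero]
    have e1 : μ (T ⁻¹' (Set.Ici (w - c n)) ∩ f n ⁻¹' {c n})
        = μ (T ⁻¹' (Set.Ici (w - c n))) * ENNReal.ofReal p := by
      rw [hTB.measure_inter_preimage_eq_mul _ _ measurableSet_Ici
        (measurableSet_singleton _), hone']
    have e0 : μ (T ⁻¹' (Set.Ici w) ∩ f n ⁻¹' {0})
        = μ (T ⁻¹' (Set.Ici w)) * ENNReal.ofReal (1 - p) := by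
      rw [hTB.measure_inter_preimage_eq_mul _ _ measurableSet_Ici
        (measurableSet_singleton _), hzero']
    have hpre1 : T ⁻¹' (Set.Ici (w - c n)) = {ω | w - c n ≤ ∑ i ∈ Finset.range n, c i * β i ω} := by
      ext ω; simp [hT, hf, Set.mem_preimage]
    have hpre0 : T ⁻¹' (Set.Ici w) = {ω | w ≤ ∑ i ∈ Finset.range n, c i * β i ω} := by
      ext ω; simp [hT, hf, Set.mem_preimage]
    rw [hsplit, measure_union hdisj hmeas1, e1, e0, hpre1, hpre0]
    ring

/-- The master lemma: strengthened two-threshold inequality,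
proved by induction on the number of bets. -/
lemma bp_master (p : ℝ) (β : ℕ → Ω → ℝ) (hmeas : ∀ i, Measurable (β i))
    (hval : ∀ i ω, β i ω = 0 ∨ β i ω = 1)
    (hβp : ∀ i, μ {ω | β i ω = 1} = ENNReal.ofReal p)
    (hindep : iIndepFun β μ)
    (hp0 : 0 ≤ p) (hp : p ≤ 1 / 2) (c : ℕ → ℝ) (hc : ∀ i, 0 ≤ c i) :
    ∀ n : ℕ, ∀ x y : ℝ, y ≤ x → (∑ i ∈ Finset.range n, c i) < x + y →
      p * (μ {ω | y ≤ ∑ i ∈ Finset.range n, c i * β i ω}).toReal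
        + (1-p) * (μ {ω | x ≤ ∑ i ∈ Finset.range n, c i * β i ω}).toReal ≤ p := by
  have hp1 : p ≤ 1 := by linarith
  -- real-valued probability and its basic properties
  set F : ℕ → ℝ → ℝ := fun n w => (μ {ω | w ≤ ∑ i ∈ Finset.range n, c i * β i ω}).toReal with hF
  have hF0 : ∀ n w, 0 ≤ F n w := fun n w => ENNReal.toReal_nonneg
  have hF1 : ∀ n w, F n w ≤ 1 := by
    intro n w
    have h : μ {ω | w ≤ ∑ i ∈ Finset.range n, c i * β i ω} ≤ 1 := prob_le_one
    calc F n w ≤ (1 : ENNReal).toReal := ENNReal.toReal_mono (by simp) h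
      _ = 1 := by simp
  have hFanti : ∀ n, ∀ a b : ℝ, a ≤ b → F n b ≤ F n a := by
    intro n a b hab
    apply ENNReal.toReal_mono (measure_ne_top μ _)
    apply measure_mono
    intro ω hω
    simp only [Set.mem_setOf_eq] at *
    linarith
  have hrec : ∀ n w, F (n+1) w = p * F n (w - c n) + (1-p) * F n w := by
    intro n w
    have hd := bp_decomp μ p β hmeas hval hβp hindep hp0 hp1 c n w
    have h1 : ENNReal.ofReal p * μ {ω | w - c n ≤ ∑ i ∈ Finset.range n, c i * β i ω} ≠ ⊤ :=
      ENNReal.mul_ne_top ENNReal.ofReal_ne_top (measure_ne_top μ _)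
    have h2 : ENNReal.ofReal (1-p) * μ {ω | w ≤ ∑ i ∈ Finset.range n, c i * β i ω} ≠ ⊤ :=
      ENNReal.mul_ne_top ENNReal.ofReal_ne_top (measure_ne_top μ _)
    simp only [hF]
    rw [hd, ENNReal.toReal_add h1 h2, ENNReal.toReal_mul, ENNReal.toReal_mul,
      ENNReal.toReal_ofReal hp0, ENNReal.toReal_ofReal (by linarith : (0:ℝ) ≤ 1 - p)]
  intro n
  induction n with
  | zero =>
    intro x y hyx hxy
    simp only [Finset.range_zero, Finset.sum_empty] at hxy ⊢
    have hx : 0 < x := by linarith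
    have hempty : {ω : Ω | x ≤ ∑ i ∈ Finset.range 0, c i * β i ω} = ∅ := by
      ext ω; simp; linarith
    have h0 : (μ {ω : Ω | x ≤ ∑ i ∈ Finset.range 0, c i * β i ω}).toReal = 0 := by
      rw [hempty]; simp
    have h1 : (μ {ω : Ω | y ≤ ∑ i ∈ Finset.range 0, c i * β i ω}).toReal ≤ 1 := hF1 0 y
    have h2 : (0:ℝ) ≤ (μ {ω : Ω | y ≤ ∑ i ∈ Finset.range 0, c i * β i ω}).toReal :=
      ENNReal.toReal_nonneg
    simp only [Finset.range_zero, Finset.sum_empty] at h0 h1 h2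
    nlinarith
  | succ n ih =>
    intro x y hyx hsum
    rw [Finset.sum_range_succ] at hsum
    have hgoal : p * F (n+1) y + (1-p) * F (n+1) x ≤ p := by
      rw [hrec n y, hrec n x]
      set a := F n x with ha
      set b := F n (x - c n) with hb
      set d := F n y with hd
      set e := F n (y - c n) with he
      have hab : a ≤ b := hFanti n (x - c n) x (by linarith [hc n])
      have had : a ≤ d := hFanti n y x hyx
      have h2 : p * e + (1-p) * a ≤ p := by
        have := ih x (y - c n) (by linarith [hc n]) (by linarith)
        simpa [hF, ha, he] using this
      have k1 : p * (p * e + (1-p) * a) ≤ p * p :=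
        mul_le_mul_of_nonneg_left h2 hp0
      rcases le_total y (x - c n) with hcase | hcase
      · have h4 : p * d + (1-p) * b ≤ p := by
          have := ih (x - c n) y hcase (by linarith)
          simpa [hF, hb, hd] using this
        have k2 : (1-p) * (p * d + (1-p) * b) ≤ (1-p) * p :=
          mul_le_mul_of_nonneg_left h4 (by linarith)
        have k3 : ((1-p) * ((1-p) - p)) * a ≤ ((1-p) * ((1-p) - p)) * b :=
          mul_le_mul_of_nonneg_left hab (by nlinarith)
        nlinarith [k1, k2, k3]
      · have h4 : p * b + (1-p) * d ≤ p := by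
          have := ih y (x - c n) hcase (by linarith)
          simpa [hF, hb, hd] using this
        have k2 : (1-p) * (p * b + (1-p) * d) ≤ (1-p) * p :=
          mul_le_mul_of_nonneg_left h4 (by linarith)
        have k3 : ((1-p) * ((1-p) - p)) * a ≤ ((1-p) * ((1-p) - p)) * d :=
          mul_le_mul_of_nonneg_left had (by nlinarith)
        nlinarith [k1, k2, k3]
    simpa [hF] using hgoal

end Aux

/-- **High threshold: bold play is optimal.** If `p ≤ 1/2 < t ≤ 1`, then for any
nonnegative stake sequence `(c i)` summing to `1` placed on iid Bernoulli(p) bets,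
the probability of reaching the threshold `t` is at most `p`; bold play, staking
everything on a single bet, attains `p`. -/
theorem boldPlay_optimal_high_threshold {Ω : Type*} [MeasurableSpace Ω]
    (μ : Measure Ω) [IsProbabilityMeasure μ] (p t : ℝ)
    (β : ℕ → Ω → ℝ) (hmeas : ∀ i, Measurable (β i))
    (hval : ∀ i ω, β i ω = 0 ∨ β i ω = 1)
    (hβp : ∀ i, μ {ω | β i ω = 1} = ENNReal.ofReal p)
    (hindep : iIndepFun β μ)
    (hp0 : 0 ≤ p) (hp : p ≤ 1 / 2) (ht : 1 / 2 < t) (ht1 : t ≤ 1) :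
    (∀ c : ℕ → ℝ, (∀ i, 0 ≤ c i) → (∑' i, c i) = 1 →
      (μ {ω | t ≤ ∑' i, c i * β i ω}).toReal ≤ p) ∧
    (μ {ω | t ≤ β 0 ω}).toReal = p := by
  constructor
  · intro c hc hsum
    -- summability of the stakes
    have hsummable : Summable c := by
      by_contra h
      rw [tsum_eq_zero_of_not_summable h] at hsum
      norm_num at hsum
    -- choose a cutoff with enough accumulated weight
    obtain ⟨n, hn⟩ : ∃ n, 2 - 2*t < ∑ i ∈ Finset.range n, c i := by
      have h1 : Filter.Tendsto (fun n => ∑ i ∈ Finset.range n, c i)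
          Filter.atTop (nhds 1) := by
        have := hsummable.hasSum.tendsto_sum_nat
        rwa [hsum] at this
      exact (h1.eventually (eventually_gt_nhds (by linarith))).exists
    set S := ∑ i ∈ Finset.range n, c i with hS
    set x := t - (1 - S) with hx
    -- the event is contained in a finite-sum event
    have hsubset : {ω | t ≤ ∑' i, c i * β i ω}
        ⊆ {ω | x ≤ ∑ i ∈ Finset.range n, c i * β i ω} := by
      intro ω hω
      simp only [Set.mem_setOf_eq] at hω ⊢
      have hβ01 : ∀ i, 0 ≤ β i ω ∧ β i ω ≤ 1 := by
        intro i; rcases hval i ω with h | h <;> simp [h]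
      have hg : Summable (fun i => c i * β i ω) := by
        apply Summable.of_nonneg_of_le
          (fun i => mul_nonneg (hc i) (hβ01 i).1)
          (fun i => ?_) hsummable
        calc c i * β i ω ≤ c i * 1 :=
              mul_le_mul_of_nonneg_left (hβ01 i).2 (hc i)
          _ = c i := mul_one _
      have h1 := Summable.sum_add_tsum_compl (s := Finset.range n) hg
      have h2 := Summable.sum_add_tsum_compl (s := Finset.range n) hsummable
      have htail : (∑' i : ↑(↑(Finset.range n) : Set ℕ)ᶜ, c i * β i ω)
          ≤ ∑' i : ↑(↑(Finset.range n) : Set ℕ)ᶜ, c i := by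
        apply Summable.tsum_le_tsum _ (hg.subtype _) (hsummable.subtype _)
        intro i
        calc c i * β i ω ≤ c i * 1 :=
              mul_le_mul_of_nonneg_left (hβ01 i).2 (hc i)
          _ = c i := mul_one _
      rw [hsum] at h2
      have h3 : ∑' i, c i * β i ω
          ≤ (∑ i ∈ Finset.range n, c i * β i ω) + (1 - S) := by
        rw [← h1]
        have hts : (∑' i : ↑(↑(Finset.range n) : Set ℕ)ᶜ, c i) = 1 - S := by
          simp only [hS]; linarith
        rw [← hts]
        exact add_le_add_right htail _
      linarith
    have hmono : (μ {ω | t ≤ ∑' i, c i * β i ω}).toReal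
        ≤ (μ {ω | x ≤ ∑ i ∈ Finset.range n, c i * β i ω}).toReal :=
      ENNReal.toReal_mono (measure_ne_top μ _) (measure_mono hsubset)
    have hmaster := bp_master μ p β hmeas hval hβp hindep hp0 hp c hc n x x
      le_rfl (by simp only [hx, hS] at *; linarith)
    have hFx : (μ {ω | x ≤ ∑ i ∈ Finset.range n, c i * β i ω}).toReal ≤ p := by
      nlinarith [hmaster]
    linarith
  · have hset : {ω | t ≤ β 0 ω} = {ω | β 0 ω = 1} := by
      ext ω
      rcases hval 0 ω with h | h
      · simp only [Set.mem_setOf_eq, h]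
        constructor
        · intro h'; linarith
        · intro h'; norm_num at h'
      · simp only [Set.mem_setOf_eq, h]
        constructor
        · intro _; trivial
        · intro _; linarith
    rw [hset, hβp 0, ENNReal.toReal_ofReal hp0]
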